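/- There is a constant C such that for every BNL-program Λ over a finite linearly ordered set T of schema variables, with ℓ input predicates and size s, there exist a finite set Π of proposition symbols with |Π| ≥ ℓ and a (Π,T)-program Λ' of SC of size at most C·s such that Λ' is globally equivalent to Λ. -/

import Mathlib

/-! ### Boolean network logic (BNL) -/

/-- Formulas of Boolean network logic (BNL), over schema variables indexed by `ℕ`. -/
inductive BForm where
  | tru : BForm
  | var : ℕ → BForm
  | not : BForm → BForm
  | and : BForm → BForm → BForm

namespace BForm

/-- Truth value of a BNL-formula under a valuation of the schema variables. -/
def eval (g : ℕ → Bool) : BForm → Bool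
  | tru => true
  | var x => g x
  | not φ => !(eval g φ)
  | and φ ψ => eval g φ && eval g ψ

/-- Number of occurrences of `⊤`, variables, `¬` and `∧`. -/
def size : BForm → ℕ
  | tru => 1
  | var _ => 1
  | not φ => size φ + 1
  | and φ ψ => size φ + size ψ + 1

/-- Connective-nesting depth. -/
def depth : BForm → ℕ
  | tru => 0
  | var _ => 0
  | not φ => depth φ + 1
  | and φ ψ => max (depth φ) (depth ψ) + 1

/-- The set of schema variables occurring in a formula. -/
def vars : BForm → Finset ℕ
  | tru => ∅
  | var x => {x}
  | not φ => vars φ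
  | and φ ψ => vars φ ∪ vars ψ

end BForm

/-- A BNL-program over the finite set `T` of schema variables (linearly ordered as natural
numbers), with input predicates `I`, terminal values `term` (relevant on `T \ I`), iteration
clause bodies `iter` (relevant on `T`), print predicates `Pr` and attention predicates `At`. -/
structure BNL where
  T : Finset ℕ
  I : Finset ℕ
  hIT : I ⊆ T
  term : ℕ → Bool
  iter : ℕ → BForm
  hiter : ∀ X ∈ T, (iter X).vars ⊆ T
  Pr : Finset ℕ
  hPr : Pr ⊆ T
  At : Finset ℕ
  hAt : At ⊆ T

/-- The valuation of the elements of a finite set `I ⊆ ℕ` induced by the bit string `u`,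
via the increasing enumeration of `I`. -/
def inputVal (I : Finset ℕ) (u : ℕ → Bool) (X : ℕ) : Bool :=
  u ((I.sort (· ≤ ·)).idxOf X)

namespace BNL

/-- The global configuration of a BNL-program at round `t` on input bit string `u`. -/
def conf (Λ : BNL) (u : ℕ → Bool) : ℕ → ℕ → Bool
  | 0 => fun X => if X ∈ Λ.I then inputVal Λ.I u X else Λ.term X
  | t + 1 => fun X => (Λ.iter X).eval (Λ.conf u t)

/-- The global configuration string at round `t`: the values on `T` in increasing order. -/
def confStr (Λ : BNL) (u : ℕ → Bool) (t : ℕ) : List Bool :=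
  (Λ.T.sort (· ≤ ·)).map (Λ.conf u t)

/-- Round `t` is an output round iff some attention predicate is true at round `t`. -/
def attn (Λ : BNL) (u : ℕ → Bool) (t : ℕ) : Prop :=
  ∃ X ∈ Λ.At, Λ.conf u t X = true

/-- The print string at round `t`: the values of the print predicates in increasing order. -/
def out (Λ : BNL) (u : ℕ → Bool) (t : ℕ) : List Bool :=
  (Λ.Pr.sort (· ≤ ·)).map (Λ.conf u t)

/-- The size of a BNL-program: the total number of occurrences of `⊤`, variables, `¬`
and `∧` in its terminal and iteration clauses. -/
def size (Λ : BNL) : ℕ :=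
  (Λ.T \ Λ.I).card + ∑ X ∈ Λ.T, (Λ.iter X).size

/-- The depth of a BNL-program: the maximum depth of the bodies of its iteration clauses. -/
def depth (Λ : BNL) : ℕ :=
  Λ.T.sup fun X => (Λ.iter X).depth

/-- Pointwise transient time: the least `t` such that `g_t = g_{t+c}` on `T` for some `c ≥ 1`. -/
noncomputable def transientAt (Λ : BNL) (u : ℕ → Bool) : ℕ :=
  sInf {t | ∃ c, 1 ≤ c ∧ ∀ X ∈ Λ.T, Λ.conf u (t + c) X = Λ.conf u t X}

/-- The transient time of a program: the maximum of its pointwise transient times. -/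
def HasTransientTime (Λ : BNL) (n : ℕ) : Prop :=
  (∀ u, Λ.transientAt u ≤ n) ∧ ∃ u, Λ.transientAt u = n

end BNL

/-- An abstract machine producing, for each input bit string, a global configuration string,
an attention condition, and a print string at every round. -/
structure Machine where
  ins : ℕ
  prints : ℕ
  conf : (ℕ → Bool) → ℕ → List Bool
  attn : (ℕ → Bool) → ℕ → Prop
  out : (ℕ → Bool) → ℕ → List Bool

/-- The output rounds of a machine on a given input, as an ordered subtype of `ℕ`. -/
abbrev Machine.Rounds (M : Machine) (u : ℕ → Bool) := {t : ℕ // M.attn u t}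

/-- The machine determined by a BNL-program. -/
def BNL.toM (Λ : BNL) : Machine :=
  ⟨Λ.I.card, Λ.Pr.card, Λ.confStr, Λ.attn, Λ.out⟩

/-- Asynchronous equivalence: equally many input and print positions and, on every input,
an order isomorphism between the output rounds under which the outputs agree. -/
def AsyncEquiv (M₁ M₂ : Machine) : Prop :=
  M₁.ins = M₂.ins ∧ M₁.prints = M₂.prints ∧
  ∀ u : ℕ → Bool, ∃ e : M₁.Rounds u ≃o M₂.Rounds u,
    ∀ t : M₁.Rounds u, M₁.out u t.val = M₂.out u (e t).val

/-- Global equivalence: asynchronous equivalence together with identical global configuration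
sequences and identical output rounds on every input. -/
def GlobalEquiv (M₁ M₂ : Machine) : Prop :=
  AsyncEquiv M₁ M₂ ∧ ∀ u t, M₁.conf u t = M₂.conf u t ∧ (M₁.attn u t ↔ M₂.attn u t)

/-- `M₁` is asynchronously equivalent to `M₂` with computation delay at most `D`:
matched output rounds `x` of `M₁` and `y` of `M₂` satisfy `y ≤ x` and `x ≤ D·y`. -/
def EquivWithDelay (M₁ M₂ : Machine) (D : ℕ) : Prop :=
  M₁.ins = M₂.ins ∧ M₁.prints = M₂.prints ∧
  ∀ u : ℕ → Bool, ∃ e : M₁.Rounds u ≃o M₂.Rounds u,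
    (∀ t : M₁.Rounds u, M₁.out u t.val = M₂.out u (e t).val) ∧
    ∀ t : M₁.Rounds u, (e t).val ≤ t.val ∧ t.val ≤ D * (e t).val

/-! ### Substitution calculus (SC) -/

/-- Formulas of substitution calculus SC, over proposition symbols and schema variables
indexed by `ℕ`. -/
inductive SForm where
  | tru : SForm
  | prop : ℕ → SForm
  | var : ℕ → SForm
  | not : SForm → SForm
  | and : SForm → SForm → SForm

namespace SForm

/-- Truth value under a valuation `M` of the propositions and `g` of the variables. -/
def eval (M : ℕ → Bool) (g : ℕ → Bool) : SForm → Bool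
  | tru => true
  | prop i => M i
  | var x => g x
  | not φ => !(eval M g φ)
  | and φ ψ => eval M g φ && eval M g ψ

/-- Number of occurrences of `⊤`, propositions, variables, `¬` and `∧`. -/
def size : SForm → ℕ
  | tru => 1
  | prop _ => 1
  | var _ => 1
  | not φ => size φ + 1
  | and φ ψ => size φ + size ψ + 1

/-- The set of proposition symbols occurring in a formula. -/
def props : SForm → Finset ℕ
  | tru => ∅
  | prop i => {i}
  | var _ => ∅
  | not φ => props φ
  | and φ ψ => props φ ∪ props ψ

/-- The set of schema variables occurring in a formula. -/
def vars : SForm → Finset ℕ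
  | tru => ∅
  | prop _ => ∅
  | var x => {x}
  | not φ => vars φ
  | and φ ψ => vars φ ∪ vars ψ

end SForm

/-- A `(Π, T)`-program of substitution calculus SC: for each schema variable in `T` a
terminal clause (a propositional formula over `Props`) and an iteration clause (a formula
over `Props` and `T`), together with print and attention predicates. -/
structure SC where
  Props : Finset ℕ
  T : Finset ℕ
  term : ℕ → SForm
  iter : ℕ → SForm
  hterm_vars : ∀ X ∈ T, (term X).vars = ∅
  hterm_props : ∀ X ∈ T, (term X).props ⊆ Props
  hiter_vars : ∀ X ∈ T, (iter X).vars ⊆ T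
  hiter_props : ∀ X ∈ T, (iter X).props ⊆ Props
  Pr : Finset ℕ
  hPr : Pr ⊆ T
  At : Finset ℕ
  hAt : At ⊆ T

namespace SC

/-- The proposition symbols that appear in the program. -/
def usedProps (Λ : SC) : Finset ℕ :=
  Λ.T.sup fun X => (Λ.term X).props ∪ (Λ.iter X).props

/-- Configurations on the model induced by the input bit string `u` (assigned to the
propositions appearing in the program, in increasing order). -/
def conf (Λ : SC) (u : ℕ → Bool) : ℕ → ℕ → Bool
  | 0 => fun X => (Λ.term X).eval (inputVal Λ.usedProps u) fun _ => false
  | t + 1 => fun X => (Λ.iter X).eval (inputVal Λ.usedProps u) (Λ.conf u t)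

/-- The global configuration string at round `t`. -/
def confStr (Λ : SC) (u : ℕ → Bool) (t : ℕ) : List Bool :=
  (Λ.T.sort (· ≤ ·)).map (Λ.conf u t)

/-- Round `t` is an output round iff some attention predicate is true at round `t`. -/
def attn (Λ : SC) (u : ℕ → Bool) (t : ℕ) : Prop :=
  ∃ X ∈ Λ.At, Λ.conf u t X = true

/-- The print string at round `t`. -/
def out (Λ : SC) (u : ℕ → Bool) (t : ℕ) : List Bool :=
  (Λ.Pr.sort (· ≤ ·)).map (Λ.conf u t)

/-- The size of an SC-program. -/
def size (Λ : SC) : ℕ :=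
  ∑ X ∈ Λ.T, ((Λ.term X).size + (Λ.iter X).size)

/-- The machine determined by an SC-program. -/
def toM (Λ : SC) : Machine :=
  ⟨Λ.usedProps.card, Λ.Pr.card, Λ.confStr, Λ.attn, Λ.out⟩

/-- Pointwise transient time: the least `t` such that `g_t = g_{t+c}` on `T` for some `c ≥ 1`. -/
noncomputable def transientAt (Λ : SC) (u : ℕ → Bool) : ℕ :=
  sInf {t | ∃ c, 1 ≤ c ∧ ∀ X ∈ Λ.T, Λ.conf u (t + c) X = Λ.conf u t X}

/-- The transient time of a program: the maximum of its pointwise transient times. -/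
def HasTransientTime (Λ : SC) (n : ℕ) : Prop :=
  (∀ u, Λ.transientAt u ≤ n) ∧ ∃ u, Λ.transientAt u = n

end SC

/-! ### Auxiliary material for the proof -/

/-- Translation of a BNL-formula into an SC-formula. -/
def BForm.toS : BForm → SForm
  | .tru => .tru
  | .var x => .var x
  | .not φ => .not φ.toS
  | .and φ ψ => .and φ.toS ψ.toS

lemma BForm.toS_eval (M g : ℕ → Bool) (φ : BForm) : φ.toS.eval M g = φ.eval g := by
  induction φ <;> simp [BForm.toS, BForm.eval, SForm.eval, *]

lemma BForm.toS_props (φ : BForm) : φ.toS.props = ∅ := by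
  induction φ <;> simp [BForm.toS, SForm.props, *]

lemma BForm.toS_vars (φ : BForm) : φ.toS.vars = φ.vars := by
  induction φ <;> simp [BForm.toS, SForm.vars, BForm.vars, *]

lemma BForm.toS_size (φ : BForm) : φ.toS.size = φ.size := by
  induction φ <;> simp [BForm.toS, SForm.size, BForm.size, *]

lemma BForm.one_le_size (φ : BForm) : 1 ≤ φ.size := by
  induction φ <;> simp [BForm.size] <;> omega

lemma BForm.eval_congr (φ : BForm) (g g' : ℕ → Bool)
    (h : ∀ x ∈ φ.vars, g x = g' x) : φ.eval g = φ.eval g' := by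
  induction φ with
  | tru => rfl
  | var x => exact h x (by simp [BForm.vars])
  | not φ ih => simp [BForm.eval, ih fun x hx => h x (by simpa [BForm.vars] using hx)]
  | and φ ψ ih₁ ih₂ =>
      simp [BForm.eval,
        ih₁ fun x hx => h x (by simp [BForm.vars]; exact Or.inl hx),
        ih₂ fun x hx => h x (by simp [BForm.vars]; exact Or.inr hx)]

/-- Every BNL-program with `ℓ` input predicates and size `s` has a globally
equivalent SC-program over the same set of schema variables, with `|Π| ≥ ℓ` proposition
symbols and size at most `C·s`. -/
theorem bnl_to_sc :
    ∃ C : ℕ, ∀ Λ : BNL, ∃ Λ' : SC,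
      Λ.I.card ≤ Λ'.Props.card ∧ Λ'.T = Λ.T ∧ GlobalEquiv Λ'.toM Λ.toM ∧
      Λ'.size ≤ C * Λ.size := by
  refine ⟨3, fun Λ => ?_⟩
  set tm : ℕ → SForm := fun X =>
    if X ∈ Λ.I then SForm.prop X else (if Λ.term X then SForm.tru else SForm.not SForm.tru)
    with htm
  have htmvars : ∀ X, (tm X).vars = ∅ := by
    intro X; by_cases h : X ∈ Λ.I <;> by_cases h2 : Λ.term X <;>
      simp [htm, h, h2, SForm.vars]
  have htmprops : ∀ X, (tm X).props ⊆ Λ.I := by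
    intro X; by_cases h : X ∈ Λ.I <;> by_cases h2 : Λ.term X <;>
      simp [htm, h, h2, SForm.props]
  set Λ' : SC :=
    { Props := Λ.I
      T := Λ.T
      term := tm
      iter := fun X => (Λ.iter X).toS
      hterm_vars := fun X _ => htmvars X
      hterm_props := fun X _ => htmprops X
      hiter_vars := fun X hX => by rw [BForm.toS_vars]; exact Λ.hiter X hX
      hiter_props := fun X _ => by simp [BForm.toS_props]
      Pr := Λ.Pr, hPr := Λ.hPr, At := Λ.At, hAt := Λ.hAt } with hΛ'
  have hused : Λ'.usedProps = Λ.I := by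
    ext a
    simp only [SC.usedProps, Finset.mem_sup, Finset.mem_union, BForm.toS_props,
      Finset.notMem_empty, or_false, hΛ']
    constructor
    · rintro ⟨X, hX, ha⟩
      exact htmprops X ha
    · intro ha
      refine ⟨a, Λ.hIT ha, ?_⟩
      simp [htm, ha, SForm.props]
  have hconf : ∀ u t X, X ∈ Λ.T → Λ'.conf u t X = Λ.conf u t X := by
    intro u t
    induction t with
    | zero =>
        intro X hX
        simp only [SC.conf, BNL.conf, hused]
        simp only [hΛ']
        by_cases h : X ∈ Λ.I <;> by_cases h2 : Λ.term X <;>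
          simp [htm, h, h2, SForm.eval]
    | succ t ih =>
        intro X hX
        simp only [SC.conf, BNL.conf, hΛ', BForm.toS_eval]
        exact BForm.eval_congr _ _ _ fun x hx => ih x (Λ.hiter X hX hx)
  have hattn : ∀ u t, Λ'.attn u t ↔ Λ.attn u t := by
    intro u t
    unfold SC.attn BNL.attn
    constructor <;> rintro ⟨X, hX, hv⟩ <;> refine ⟨X, hX, ?_⟩
    · rw [← hconf u t X (Λ.hAt hX)]; exact hv
    · rw [hconf u t X (Λ.hAt hX)]; exact hv
  have hout : ∀ u t, Λ'.out u t = Λ.out u t := by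
    intro u t
    unfold SC.out BNL.out
    apply List.map_congr_left
    intro X hX
    exact hconf u t X (Λ.hPr (by simpa using hX))
  refine ⟨Λ', le_refl _, rfl, ⟨⟨?_, ?_, ?_⟩, ?_⟩, ?_⟩
  · simp [SC.toM, BNL.toM, Machine.ins, hused]
  · rfl
  · intro u
    refine ⟨⟨⟨fun t => ⟨t.1, (hattn u t.1).1 t.2⟩, fun t => ⟨t.1, (hattn u t.1).2 t.2⟩,
      fun t => rfl, fun t => rfl⟩, Iff.rfl⟩, fun t => hout u t.1⟩
  · intro u t
    constructor
    · unfold SC.toM BNL.toM Machine.conf SC.confStr BNL.confStr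
      apply List.map_congr_left
      intro X hX
      exact hconf u t X (by simpa using hX)
    · exact hattn u t
  · have hcard : Λ.T.card ≤ ∑ X ∈ Λ.T, (Λ.iter X).size := by
      calc Λ.T.card = ∑ _X ∈ Λ.T, 1 := by simp
        _ ≤ _ := Finset.sum_le_sum fun X _ => BForm.one_le_size _
    have htmsize : ∀ X, (tm X).size ≤ 2 := by
      intro X; by_cases h : X ∈ Λ.I <;> by_cases h2 : Λ.term X <;>
        simp [htm, h, h2, SForm.size]
    calc Λ'.size = ∑ X ∈ Λ.T, ((tm X).size + (Λ.iter X).size) := by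
            simp [SC.size, hΛ', BForm.toS_size]
      _ ≤ ∑ X ∈ Λ.T, (2 + (Λ.iter X).size) :=
            Finset.sum_le_sum fun X _ => by have := htmsize X; omega
      _ = 2 * Λ.T.card + ∑ X ∈ Λ.T, (Λ.iter X).size := by
            rw [Finset.sum_add_distrib, Finset.sum_const, smul_eq_mul, mul_comm]
      _ ≤ 3 * ∑ X ∈ Λ.T, (Λ.iter X).size := by omega
      _ ≤ 3 * Λ.size := by unfold BNL.size; omega
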